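/- (Simultaneous row and column expansion; projection-matrix expansion.) Let M ∈ ℝ^{D_S×D_S} and b ∈ ℝ^{D_S}, let k = ⌊D_T/D_S⌋ and r = D_T mod D_S. Let N = [M¹, …, M^k, M^res] ∈ ℝ^{D_S×D_T} be a column-circular expansion of M, i.e. M^res + ∑_{i=1}^k Mⁱ[:, :r] = M[:, :r] and ∑_{i=1}^k Mⁱ[:, r:] = M[:, r:]. Let M** ∈ ℝ^{D_T×D_T} be the row-average expansion of N, i.e. M**[i,:] = N[i mod D_S,:] for i < k·D_S and M**[i,:] = (1/D_S)·∑_{j<D_S} N[j,:] for k·D_S ≤ i < D_T. Then for every x ∈ ℝ^{D_S}, M**·V_circ(x) + V_avg(b) = V_avg(M·x + b). -/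

import Mathlib

/-- Index bound for the tail part of an expansion from dimension `DS` to `DT`. -/
theorem sub_lt_mod (DS DT i : ℕ) (hDS : 0 < DS) (hi : i < DT) (h2 : DT / DS * DS ≤ i) :
    i - DT / DS * DS < DT % DS := by
  have h := Nat.div_add_mod' DT DS
  set m := DT / DS * DS
  omega

/-- Average expansion `V_avg` from `ℝ^{DS}` to `ℝ^{DT}`. -/
noncomputable def vAvg (DS DT : ℕ) (hDS : 0 < DS) (x : Fin DS → ℝ) : Fin DT → ℝ :=
  fun i => if i.val < DT / DS * DS then x ⟨i.val % DS, Nat.mod_lt _ hDS⟩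
           else (∑ j, x j) / (DS : ℝ)

/-- Zero expansion `V_zero` from `ℝ^{DS}` to `ℝ^{DT}`. -/
def vZero (DS DT : ℕ) (hDS : 0 < DS) (x : Fin DS → ℝ) : Fin DT → ℝ :=
  fun i => if i.val < DT / DS * DS then x ⟨i.val % DS, Nat.mod_lt _ hDS⟩ else 0

/-- Circular expansion `V_circ` from `ℝ^{DS}` to `ℝ^{DT}`. -/
def vCirc (DS DT : ℕ) (hDS : 0 < DS) (x : Fin DS → ℝ) : Fin DT → ℝ :=
  fun i => x ⟨i.val % DS, Nat.mod_lt _ hDS⟩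

/-- Mean of a vector. -/
noncomputable def meanV {D : ℕ} (x : Fin D → ℝ) : ℝ := (∑ i, x i) / (D : ℝ)

/-- Population variance of a vector. -/
noncomputable def varV {D : ℕ} (x : Fin D → ℝ) : ℝ := (∑ i, (x i - meanV x) ^ 2) / (D : ℝ)

/-- Matrix column-circular expansion: the horizontal concatenation
`[M¹, …, M^k, M^res] ∈ ℝ^{P×D_T}` of `k = ⌊D_T/D_S⌋` blocks and a residual block. -/
noncomputable def colCirc (DS DT P : ℕ) (hDS : 0 < DS)
    (Ms : Fin (DT / DS) → Matrix (Fin P) (Fin DS) ℝ)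
    (Mres : Matrix (Fin P) (Fin (DT % DS)) ℝ) : Matrix (Fin P) (Fin DT) ℝ :=
  fun i j => if h : j.val < DT / DS * DS
    then Ms ⟨j.val / DS, (Nat.div_lt_iff_lt_mul hDS).mpr h⟩ i ⟨j.val % DS, Nat.mod_lt _ hDS⟩
    else Mres i ⟨j.val - DT / DS * DS, sub_lt_mod DS DT j.val hDS j.isLt (Nat.not_lt.mp h)⟩

/-- Matrix row-average expansion: repeat the rows of `N` cyclically for the first
`⌊D_T/D_S⌋·D_S` rows and fill the remaining rows with the row average of `N`. -/
noncomputable def rowAvg (DS DT P : ℕ) (hDS : 0 < DS) (N : Matrix (Fin DS) (Fin P) ℝ) :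
    Matrix (Fin DT) (Fin P) ℝ :=
  fun i j => if i.val < DT / DS * DS then N ⟨i.val % DS, Nat.mod_lt _ hDS⟩ j
             else (∑ l, N l j) / (DS : ℝ)

/-- Key lemma: a column-circular expansion applied to the circular
expansion of `x` reproduces `M·x` on each source row. -/
theorem key (DS DT : ℕ) (hDS : 0 < DS)
    (M : Matrix (Fin DS) (Fin DS) ℝ)
    (Ms : Fin (DT / DS) → Matrix (Fin DS) (Fin DS) ℝ)
    (Mres : Matrix (Fin DS) (Fin (DT % DS)) ℝ)
    (hres : ∀ (i : Fin DS) (j : Fin (DT % DS)),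
      Mres i j + ∑ l, Ms l i ⟨j.val, j.isLt.trans (Nat.mod_lt DT hDS)⟩
        = M i ⟨j.val, j.isLt.trans (Nat.mod_lt DT hDS)⟩)
    (hrest : ∀ (i : Fin DS) (j : Fin DS), DT % DS ≤ j.val → ∑ l, Ms l i j = M i j)
    (x : Fin DS → ℝ) (p : Fin DS) :
    ∑ j : Fin DT, colCirc DS DT DS hDS Ms Mres p j * x ⟨j.val % DS, Nat.mod_lt _ hDS⟩
      = ∑ s, M p s * x s := by
  have hkr : DT / DS * DS + DT % DS = DT := Nat.div_add_mod' DT DS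
  have hr : DT % DS ≤ DS := le_of_lt (Nat.mod_lt DT hDS)
  set f : Fin DT → ℝ :=
    fun j => colCirc DS DT DS hDS Ms Mres p j * x ⟨j.val % DS, Nat.mod_lt _ hDS⟩ with hf
  have h1 : ∑ j : Fin DT, f j
      = ∑ j : Fin (DT / DS * DS + DT % DS), f (Fin.cast hkr j) :=
    (Fin.sum_congr' f hkr).symm
  rw [h1, ← finSumFinEquiv.sum_comp, Fintype.sum_sum_type]
  have hleft : ∑ j : Fin (DT / DS * DS), f (Fin.cast hkr (finSumFinEquiv (Sum.inl j)))
      = ∑ s : Fin DS, (∑ l, Ms l p s) * x s := by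
    rw [← finProdFinEquiv.sum_comp, Fintype.sum_prod_type]
    rw [Finset.sum_comm]
    refine Finset.sum_congr rfl fun s _ => ?_
    rw [Finset.sum_mul]
    refine Finset.sum_congr rfl fun l _ => ?_
    have hval : ((Fin.cast hkr (finSumFinEquiv (Sum.inl (finProdFinEquiv (l, s))))) : Fin DT).val
        = s.val + DS * l.val := by simp [finProdFinEquiv]
    have hlt : s.val + DS * l.val < DT / DS * DS := by
      calc s.val + DS * l.val < DS + DS * l.val := by omega
        _ = DS * (l.val + 1) := by ring
        _ ≤ DS * (DT / DS) := Nat.mul_le_mul_left _ l.isLt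
        _ = DT / DS * DS := Nat.mul_comm _ _
    simp only [hf, colCirc, hval, dif_pos hlt]
    have hdiv : (s.val + DS * l.val) / DS = l.val := by
      rw [Nat.add_mul_div_left _ _ hDS, Nat.div_eq_of_lt s.isLt, Nat.zero_add]
    have hmod : (s.val + DS * l.val) % DS = s.val := by
      rw [Nat.add_mul_mod_self_left, Nat.mod_eq_of_lt s.isLt]
    congr 1
    · congr 1 <;> exact Fin.ext (by simp [hdiv, hmod])
    · congr 1; exact Fin.ext (by simp [hmod])
  have hright : ∑ t : Fin (DT % DS), f (Fin.cast hkr (finSumFinEquiv (Sum.inr t)))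
      = ∑ t : Fin (DT % DS), Mres p t * x (Fin.castLE hr t) := by
    refine Finset.sum_congr rfl fun t _ => ?_
    have hval : ((Fin.cast hkr (finSumFinEquiv (Sum.inr t))) : Fin DT).val
        = DT / DS * DS + t.val := by simp
    have hnlt : ¬ (DT / DS * DS + t.val < DT / DS * DS) := by omega
    have hmod : (DT / DS * DS + t.val) % DS = t.val := by
      rw [Nat.mul_comm, Nat.add_comm, Nat.add_mul_mod_self_left,
        Nat.mod_eq_of_lt (t.isLt.trans_le hr)]
    simp only [hf, colCirc, hval, dif_neg hnlt]
    congr 1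
    · congr 1; exact Fin.ext (by simp)
    · congr 1; exact Fin.ext (by simp [hmod])
  rw [hleft, hright]
  have hsub : ∀ s : Fin DS, (M p s - ∑ l, Ms l p s) * x s
      = if h : s.val < DT % DS then Mres p ⟨s.val, h⟩ * x s else 0 := by
    intro s
    by_cases h : s.val < DT % DS
    · rw [dif_pos h]
      have := hres p ⟨s.val, h⟩
      simp only [Fin.eta] at this
      rw [← this]; ring
    · rw [dif_neg h, hrest p s (le_of_not_gt h)]; ring
  have hexp : ∑ s : Fin DS, M p s * x s
      = ∑ s : Fin DS, ((∑ l, Ms l p s) * x s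
        + if h : s.val < DT % DS then Mres p ⟨s.val, h⟩ * x s else 0) := by
    refine Finset.sum_congr rfl fun s _ => ?_
    rw [← hsub s]; ring
  rw [hexp, Finset.sum_add_distrib]
  congr 1
  set G : Fin DS → ℝ :=
    fun s => if h : s.val < DT % DS then Mres p ⟨s.val, h⟩ * x s else 0 with hG
  have hmap : ∑ s ∈ Finset.univ.map (Fin.castLEEmb hr), G s
      = ∑ t : Fin (DT % DS), G (Fin.castLE hr t) := Finset.sum_map _ _ _
  have hsubset : ∑ s : Fin DS, G s = ∑ s ∈ Finset.univ.map (Fin.castLEEmb hr), G s := by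
    refine (Finset.sum_subset (Finset.subset_univ _) fun s _ hs => ?_).symm
    have hns : ¬ s.val < DT % DS := by
      intro h
      apply hs
      simp only [Finset.mem_map, Finset.mem_univ, true_and]
      exact ⟨⟨s.val, h⟩, Fin.ext rfl⟩
    simp [hG, hns]
  rw [hsubset, hmap]
  refine Finset.sum_congr rfl fun t _ => ?_
  have ht : (Fin.castLE hr t).val < DT % DS := t.isLt
  simp only [hG, dif_pos ht]
  congr 1

/-- simultaneous row and column expansion; projection-matrix
expansion: if `N = [M¹, …, M^k, M^res]` is a column-circular expansion of `M` and
`M**` is the row-average expansion of `N`, then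
`M**·V_circ(x) + V_avg(b) = V_avg(M·x + b)`. -/
theorem stmt_12 (DS DT : ℕ) (hDS : 0 < DS) (hDT : DS ≤ DT)
    (M : Matrix (Fin DS) (Fin DS) ℝ) (b : Fin DS → ℝ)
    (Ms : Fin (DT / DS) → Matrix (Fin DS) (Fin DS) ℝ)
    (Mres : Matrix (Fin DS) (Fin (DT % DS)) ℝ)
    (hres : ∀ (i : Fin DS) (j : Fin (DT % DS)),
      Mres i j + ∑ l, Ms l i ⟨j.val, j.isLt.trans (Nat.mod_lt DT hDS)⟩
        = M i ⟨j.val, j.isLt.trans (Nat.mod_lt DT hDS)⟩)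
    (hrest : ∀ (i : Fin DS) (j : Fin DS), DT % DS ≤ j.val → ∑ l, Ms l i j = M i j)
    (x : Fin DS → ℝ) :
    (rowAvg DS DT DT hDS (colCirc DS DT DS hDS Ms Mres)).mulVec (vCirc DS DT hDS x)
        + vAvg DS DT hDS b
      = vAvg DS DT hDS (M.mulVec x + b) := by
  have hkey := key DS DT hDS M Ms Mres hres hrest x
  funext i
  simp only [Pi.add_apply, Matrix.mulVec, dotProduct, rowAvg, vAvg, vCirc]
  by_cases h : i.val < DT / DS * DS
  · simp only [if_pos h]
    rw [hkey ⟨i.val % DS, Nat.mod_lt _ hDS⟩]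
  · simp only [if_neg h]
    have hstep : ∀ j : Fin DT,
        (∑ l, colCirc DS DT DS hDS Ms Mres l j) / (DS : ℝ)
            * x ⟨j.val % DS, Nat.mod_lt _ hDS⟩
        = (∑ l, colCirc DS DT DS hDS Ms Mres l j * x ⟨j.val % DS, Nat.mod_lt _ hDS⟩)
            / (DS : ℝ) := by
      intro j; rw [div_mul_eq_mul_div, Finset.sum_mul]
    rw [Finset.sum_congr rfl fun j _ => hstep j, ← Finset.sum_div, Finset.sum_comm,
      Finset.sum_congr rfl fun l _ => hkey l]
    simp [Matrix.mulVec, dotProduct, Finset.sum_add_distrib, add_div]
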